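/- Let L be a finite simplicial complex in which the link of every simplex has an even number of simplices, and let L' be its barycentric subdivision with simplices oriented by the face-relation order. Fix 0 ≤ k' < k ≤ dim L with ⌊k/2⌋ ≤ k', and fix a k'-simplex Δ^{k'} = (τ_0 < ⋯ < τ_{k'}) of L'. Then the number N(Δ^{k'}) of k-simplices (σ_0 < ⋯ < σ_k) of L' from which (τ_0,...,τ_{k'}) is obtained by omitting one or more entries σ_j with odd index j is even. -/

import Mathlib

open Finset

set_option maxHeartbeats 1600000 in
/-- in a finite simplicial complex `L` whose every link has an even number
of simplices, with `⌊k/2⌋ ≤ k' < k ≤ dim L`, for any fixed `k'`-simplex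
`(τ_0 < ⋯ < τ_{k'})` of the barycentric subdivision `L'`, the number of `k`-simplices
`(σ_0 < ⋯ < σ_k)` of `L'` from which `(τ_0,…,τ_{k'})` is obtained by omitting one or
more odd-index entries is even. -/
theorem barycentric_odd_omission_count_even {V : Type*} [Fintype V] [DecidableEq V]
    (L : Finset (Finset V))
    (hne : ∅ ∉ L)
    (hdown : ∀ σ ∈ L, ∀ τ : Finset V, τ ⊆ σ → τ ≠ ∅ → τ ∈ L)
    (hlink : ∀ σ ∈ L,
      Even ((L.filter (fun τ => τ ∩ σ = ∅ ∧ τ ∪ σ ∈ L)).card))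
    (d k k' : ℕ)
    (hdim : ∀ σ ∈ L, σ.card ≤ d + 1)
    (hk : k ≤ d) (hk' : k' < k) (hk'2 : k / 2 ≤ k')
    (τ : Fin (k' + 1) → Finset V)
    (hτmono : StrictMono τ) (hτL : ∀ m, τ m ∈ L) :
    Even (Nat.card {σ : Fin (k + 1) → Finset V //
      StrictMono σ ∧ (∀ j, σ j ∈ L) ∧
      ∃ ι : Fin (k' + 1) → Fin (k + 1), StrictMono ι ∧
        (∀ m, σ (ι m) = τ m) ∧
        ∀ j : Fin (k + 1), (∀ m, ι m ≠ j) → j.val % 2 = 1}) := by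
  classical
  set P : (Fin (k + 1) → Finset V) → Prop := fun σ =>
    StrictMono σ ∧ (∀ j, σ j ∈ L) ∧
    ∃ ι : Fin (k' + 1) → Fin (k + 1), StrictMono ι ∧
      (∀ m, σ (ι m) = τ m) ∧
      ∀ j : Fin (k + 1), (∀ m, ι m ≠ j) → j.val % 2 = 1 with hPdef
  have hcard : Nat.card {σ : Fin (k + 1) → Finset V // P σ}
      = (Finset.univ.filter P).card := by
    rw [Nat.card_eq_fintype_card]
    exact Fintype.card_subtype _
  rw [hcard]
  -- the set of "omitted" positions of a chain
  set omt : (Fin (k + 1) → Finset V) → Finset (Fin (k + 1)) :=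
    fun σ => Finset.univ.filter (fun j => ∀ m, σ j ≠ τ m) with homtdef
  set jmax : (Fin (k + 1) → Finset V) → Fin (k + 1) :=
    fun σ => if h : (omt σ).Nonempty then (omt σ).max' h else 0 with hjmaxdef
  -- every chain satisfying P has a nonempty omitted set
  have hne_omt : ∀ σ, P σ → (omt σ).Nonempty := by
    intro σ hσ
    obtain ⟨hmono, hmem, ι, hιmono, hιτ, hιodd⟩ := hσ
    by_contra hcon
    rw [Finset.not_nonempty_iff_eq_empty] at hcon
    have hkept : (Finset.univ : Finset (Fin (k + 1)))
        ⊆ Finset.image ι Finset.univ := by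
      intro j _
      have hj : j ∉ omt σ := by rw [hcon]; exact Finset.notMem_empty j
      simp only [homtdef, Finset.mem_filter, Finset.mem_univ, true_and,
        not_forall, not_not] at hj
      obtain ⟨m, hm⟩ := hj
      have : σ (ι m) = σ j := by rw [hιτ m, ← hm]
      exact Finset.mem_image.2 ⟨m, Finset.mem_univ m, hmono.injective this⟩
    have h1 : (Finset.univ : Finset (Fin (k + 1))).card ≤
        (Finset.image ι Finset.univ).card := Finset.card_le_card hkept
    have h2 : (Finset.image ι Finset.univ).card ≤ k' + 1 := by
      calc (Finset.image ι Finset.univ).card ≤ (Finset.univ : Finset (Fin (k' + 1))).card :=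
            Finset.card_image_le
        _ = k' + 1 := by simp
    simp only [Finset.card_univ, Fintype.card_fin] at h1
    omega
  rw [Finset.card_eq_sum_card_fiberwise
    (f := fun σ => ((jmax σ, Function.update σ (jmax σ) ∅) :
      Fin (k + 1) × (Fin (k + 1) → Finset V)))
    (t := Finset.univ) (fun x _ => Finset.mem_univ _)]
  rw [even_iff_two_dvd]
  refine Finset.dvd_sum ?_
  rintro ⟨j, g⟩ -
  set F := (Finset.univ.filter P).filter
    (fun σ => ((jmax σ, Function.update σ (jmax σ) ∅) :
      Fin (k + 1) × (Fin (k + 1) → Finset V)) = (j, g)) with hFdef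
  rcases F.eq_empty_or_nonempty with hF | ⟨σs, hσs⟩
  · rw [hF]; simp
  -- unpack the witness
  rw [hFdef, Finset.mem_filter, Finset.mem_filter, Prod.mk.injEq] at hσs
  obtain ⟨⟨-, hPs⟩, hjs, hgs⟩ := hσs
  obtain ⟨hmono, hmem, ι, hιmono, hιτ, hιodd⟩ := hPs
  have hPs' : P σs := ⟨hmono, hmem, ι, hιmono, hιτ, hιodd⟩
  have hnes := hne_omt σs hPs'
  have hjmem : j ∈ omt σs := by
    rw [← hjs, hjmaxdef]; simp only [dif_pos hnes]; exact Finset.max'_mem _ _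
  have hjtop : ∀ j' ∈ omt σs, j' ≤ j := by
    intro j' hj'
    rw [← hjs, hjmaxdef]; simp only [dif_pos hnes]
    exact Finset.le_max' _ _ hj'
  have hjomt : ∀ m, σs j ≠ τ m := by
    have := hjmem
    simp only [homtdef, Finset.mem_filter, Finset.mem_univ, true_and] at this
    exact this
  have hι_ne : ∀ m, ι m ≠ j := by
    intro m hmj
    exact hjomt m (hmj ▸ hιτ m)
  have hjodd : j.val % 2 = 1 := hιodd j hι_ne
  have hgs' : Function.update σs j ∅ = g := by rw [← hjs]; exact hgs
  have hj1 : 1 ≤ j.val := by omega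
  have hjk : j.val ≤ k := Nat.lt_succ_iff.mp j.isLt
  -- generic fiber description machinery
  have fiber_eq : ∀ X : Finset (Finset V),
      (∀ x ∈ X, P (Function.update σs j x) ∧ (∀ m, x ≠ τ m)) →
      (∀ σ, σ ∈ F → σ j ∈ X) →
      F = X.image (fun x => Function.update σs j x) := by
    intro X hX hmem2
    ext σ
    constructor
    · intro hσ
      have hσ' := hσ
      rw [hFdef, Finset.mem_filter, Finset.mem_filter, Prod.mk.injEq] at hσ'
      obtain ⟨⟨-, hPσ⟩, hjσ, hgσ⟩ := hσ'
      have hg2 : Function.update σ j ∅ = g := by rw [← hjσ]; exact hgσ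
      have hagree : ∀ j' : Fin (k + 1), j' ≠ j → σ j' = σs j' := by
        intro j' hj'
        have := congrFun (hg2.trans hgs'.symm) j'
        simpa [Function.update_of_ne hj'] using this
      refine Finset.mem_image.2 ⟨σ j, hmem2 σ hσ, ?_⟩
      funext j'
      by_cases h : j' = j
      · subst h; simp
      · rw [Function.update_of_ne h, hagree j' h]
    · intro hσ
      obtain ⟨x, hxX, rfl⟩ := Finset.mem_image.1 hσ
      obtain ⟨hPx, hxτ⟩ := hX x hxX
      rw [hFdef, Finset.mem_filter, Finset.mem_filter, Prod.mk.injEq]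
      have hjo : j ∈ omt (Function.update σs j x) := by
        simp only [homtdef, Finset.mem_filter, Finset.mem_univ, true_and,
          Function.update_self]
        exact hxτ
      have hnex : (omt (Function.update σs j x)).Nonempty := ⟨j, hjo⟩
      have hjmx : jmax (Function.update σs j x) = j := by
        rw [hjmaxdef]; simp only [dif_pos hnex]
        refine le_antisymm (Finset.max'_le _ _ _ ?_) (Finset.le_max' _ _ hjo)
        intro y hy
        by_cases hyj : y = j
        · exact le_of_eq hyj
        · refine hjtop y ?_
          simp only [homtdef, Finset.mem_filter, Finset.mem_univ, true_and] at hy ⊢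
          intro m
          have := hy m
          rwa [Function.update_of_ne hyj] at this
      refine ⟨⟨Finset.mem_univ _, hPx⟩, hjmx, ?_⟩
      rw [hjmx, Function.update_idem, hgs']
  -- now split on whether j is the last position
  rcases Nat.lt_or_ge j.val k with hjlt | hjge
  · -- interior case: j < k
    set jm : Fin (k + 1) := ⟨j.val - 1, by omega⟩ with hjmdef
    set jp : Fin (k + 1) := ⟨j.val + 1, by omega⟩ with hjpdef
    have hjm_lt : jm < j := by
      rw [Fin.lt_def]; show j.val - 1 < j.val; omega
    have hjp_gt : j < jp := by
      rw [Fin.lt_def]; show j.val < j.val + 1; omega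
    have hjm_ne : jm ≠ j := ne_of_lt hjm_lt
    have hjp_ne : jp ≠ j := (ne_of_lt hjp_gt).symm
    set a := σs jm with hadef
    set b := σs jp with hbdef
    have hab : a < b := hmono (lt_trans hjm_lt hjp_gt)
    have haL : a ∈ L := hmem jm
    have hbL : b ∈ L := hmem jp
    have hane : a ≠ ∅ := fun h => hne (h ▸ haL)
    have hτIoo : ∀ m, ¬(a < τ m ∧ τ m < b) := by
      rintro m ⟨h1, h2⟩
      rw [← hιτ m] at h1 h2
      have hm1 : jm < ι m := hmono.lt_iff_lt.mp h1
      have hm2 : ι m < jp := hmono.lt_iff_lt.mp h2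
      rw [Fin.lt_def] at hm1 hm2
      simp [hjmdef] at hm1
      simp [hjpdef] at hm2
      exact hι_ne m (Fin.ext (by omega))
    have key := fiber_eq (Finset.Ioo a b) ?_ ?_
    · rw [key, Finset.card_image_of_injective _ (Function.update_injective σs j),
        Finset.card_Ioo_finset (le_of_lt hab)]
      have hcardlt : a.card < b.card := Finset.card_lt_card hab
      refine Nat.dvd_sub ?_ (dvd_refl 2)
      exact dvd_pow_self 2 (by omega)
    · -- membership conditions for x ∈ Ioo a b
      intro x hx
      rw [Finset.mem_Ioo] at hx
      obtain ⟨hax, hxb⟩ := hx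
      have hxτ : ∀ m, x ≠ τ m := fun m h => hτIoo m (h ▸ ⟨hax, hxb⟩)
      have hxne : x ≠ ∅ := by
        intro h
        exact hane (Finset.subset_empty.mp (h ▸ (le_of_lt hax : a ⊆ x)))
      have hxL : x ∈ L := hdown b hbL x (le_of_lt hxb) hxne
      refine ⟨⟨?_, ?_, ι, hιmono, ?_, hιodd⟩, hxτ⟩
      · -- strict mono
        rw [Fin.strictMono_iff_lt_succ]
        intro i
        by_cases h1 : i.succ = j
        · have hcs : i.castSucc ≠ j := ne_of_lt (h1 ▸ (Fin.castSucc_lt_succ : i.castSucc < i.succ))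
          have hcsm : i.castSucc = jm := by
            have := congrArg Fin.val h1
            simp at this
            exact Fin.ext (by simp [hjmdef]; omega)
          rw [h1, Function.update_self, Function.update_of_ne hcs, hcsm]
          exact hax
        · by_cases h2 : i.castSucc = j
          · have hsp : i.succ = jp := by
              have := congrArg Fin.val h2
              simp at this
              exact Fin.ext (by simp [hjpdef]; omega)
            rw [h2, Function.update_self, Function.update_of_ne h1, hsp]
            exact hxb
          · rw [Function.update_of_ne h1, Function.update_of_ne h2]
            exact hmono ((Fin.castSucc_lt_succ : i.castSucc < i.succ))
      · intro j'
        by_cases h : j' = j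
        · subst h; rwa [Function.update_self]
        · rw [Function.update_of_ne h]; exact hmem j'
      · intro m
        rw [Function.update_of_ne (hι_ne m)]
        exact hιτ m
    · -- every fiber element's j-value lies in Ioo a b
      intro σ hσ
      rw [hFdef, Finset.mem_filter, Finset.mem_filter, Prod.mk.injEq] at hσ
      obtain ⟨⟨-, hPσ⟩, hjσ, hgσ⟩ := hσ
      have hg2 : Function.update σ j ∅ = g := by rw [← hjσ]; exact hgσ
      have hagree : ∀ j' : Fin (k + 1), j' ≠ j → σ j' = σs j' := by
        intro j' hj'
        have := congrFun (hg2.trans hgs'.symm) j'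
        simpa [Function.update_of_ne hj'] using this
      obtain ⟨hmonoσ, -, -⟩ := hPσ
      rw [Finset.mem_Ioo, hadef, hbdef, ← hagree jm hjm_ne, ← hagree jp hjp_ne]
      exact ⟨hmonoσ hjm_lt, hmonoσ hjp_gt⟩
  · -- boundary case: j = k (the last position)
    have hjval : j.val = k := le_antisymm hjk hjge
    have hk1 : 1 ≤ k := by omega
    set jm : Fin (k + 1) := ⟨k - 1, by omega⟩ with hjmdef
    have hjm_lt : jm < j := by
      rw [Fin.lt_def]; show k - 1 < j.val; omega
    have hjm_ne : jm ≠ j := ne_of_lt hjm_lt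
    set a := σs jm with hadef
    have haL : a ∈ L := hmem jm
    have hτle : ∀ m, τ m ≤ a := by
      intro m
      have h1 : (ι m).val ≤ k := Nat.lt_succ_iff.mp (ι m).isLt
      have h2 : (ι m).val ≠ k := by
        intro h
        exact hι_ne m (Fin.ext (by omega))
      have hle : ι m ≤ jm := by
        rw [Fin.le_def]; show (ι m).val ≤ k - 1; omega
      rcases lt_or_eq_of_le hle with h | h
      · rw [← hιτ m]; exact le_of_lt (hmono h)
      · rw [← hιτ m, h]
    set X := L.filter (fun x => a < x) with hXdef
    have key := fiber_eq X ?_ ?_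
    · rw [key, Finset.card_image_of_injective _ (Function.update_injective σs j)]
      have hbij : X.card = (L.filter (fun y => y ∩ a = ∅ ∧ y ∪ a ∈ L)).card := by
        refine Finset.card_bij' (fun x _ => x \ a) (fun y _ => y ∪ a) ?_ ?_ ?_ ?_
        · intro x hx
          rw [hXdef, Finset.mem_filter] at hx
          obtain ⟨hxL, hax⟩ := hx
          have hsub : a ⊆ x := le_of_lt hax
          have hxane : x \ a ≠ ∅ := by
            intro h
            exact not_le_of_gt hax (Finset.sdiff_eq_empty_iff_subset.mp h)
          refine Finset.mem_filter.2 ⟨hdown x hxL _ (Finset.sdiff_subset) hxane, ?_, ?_⟩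
          · exact Finset.sdiff_inter_self a x
          · rwa [Finset.sdiff_union_of_subset hsub]
        · intro y hy
          rw [Finset.mem_filter] at hy
          obtain ⟨hyL, hya, hyu⟩ := hy
          refine Finset.mem_filter.2 ⟨hyu, ?_⟩
          have hyne : y ≠ ∅ := fun h => hne (h ▸ hyL)
          refine lt_of_le_of_ne Finset.subset_union_right ?_
          show a ≠ y ∪ a
          intro h
          obtain ⟨v, hv⟩ := Finset.nonempty_iff_ne_empty.2 hyne
          have hv1 : v ∈ a := by rw [h]; exact Finset.mem_union_left a hv
          have : v ∈ y ∩ a := Finset.mem_inter.2 ⟨hv, hv1⟩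
          rw [hya] at this
          exact absurd this (Finset.notMem_empty v)
        · intro x hx
          rw [hXdef, Finset.mem_filter] at hx
          exact Finset.sdiff_union_of_subset (le_of_lt hx.2)
        · intro y hy
          rw [Finset.mem_filter] at hy
          exact Finset.union_sdiff_cancel_right (Finset.disjoint_iff_inter_eq_empty.mpr hy.2.1)
      rw [hbij, ← even_iff_two_dvd]
      exact hlink a haL
    · intro x hx
      rw [hXdef, Finset.mem_filter] at hx
      obtain ⟨hxL, hax⟩ := hx
      have hxτ : ∀ m, x ≠ τ m := by
        intro m h
        have := hτle m
        rw [← h] at this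
        exact absurd this (not_le_of_gt hax)
      refine ⟨⟨?_, ?_, ι, hιmono, ?_, hιodd⟩, hxτ⟩
      · rw [Fin.strictMono_iff_lt_succ]
        intro i
        have hcs_ne : i.castSucc ≠ j := by
          intro h
          have := congrArg Fin.val h
          simp [hjval] at this
          omega
        by_cases h1 : i.succ = j
        · have hcsm : i.castSucc = jm := by
            have := congrArg Fin.val h1
            simp [hjval] at this
            exact Fin.ext (by simp [hjmdef]; omega)
          rw [h1, Function.update_self, Function.update_of_ne hcs_ne, hcsm]
          exact hax
        · rw [Function.update_of_ne h1, Function.update_of_ne hcs_ne]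
          exact hmono ((Fin.castSucc_lt_succ : i.castSucc < i.succ))
      · intro j'
        by_cases h : j' = j
        · subst h; rwa [Function.update_self]
        · rw [Function.update_of_ne h]; exact hmem j'
      · intro m
        rw [Function.update_of_ne (hι_ne m)]
        exact hιτ m
    · intro σ hσ
      rw [hFdef, Finset.mem_filter, Finset.mem_filter, Prod.mk.injEq] at hσ
      obtain ⟨⟨-, hPσ⟩, hjσ, hgσ⟩ := hσ
      have hg2 : Function.update σ j ∅ = g := by rw [← hjσ]; exact hgσ
      have hagree : ∀ j' : Fin (k + 1), j' ≠ j → σ j' = σs j' := by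
        intro j' hj'
        have := congrFun (hg2.trans hgs'.symm) j'
        simpa [Function.update_of_ne hj'] using this
      obtain ⟨hmonoσ, hmemσ, -⟩ := hPσ
      rw [hXdef, Finset.mem_filter, hadef, ← hagree jm hjm_ne]
      exact ⟨hmemσ j, hmonoσ hjm_lt⟩
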